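/- Let F : T → T be a polynomial-like branched covering of a simplicial tree with global degree D = deg(F), and let μ : V(T) → ℚ be the mass function. Then for every k ≥ 0 and every vertex v ∈ V_k(T) = {v : h(v) = −k·N(F)}, one has μ(v) ≤ ((D − 1)/D)^k. -/

import Mathlib

open SimpleGraph Function Opposite

/-- A locally finite simplicial tree together with a self-map that is a
branched covering: a simplicial map (edges map onto edges) such that the
induced map on edges adjacent to any vertex is surjective onto the edges
adjacent to the image vertex, and every vertex has finitely many preimages. -/
structure TreeDyn (V : Type) where
  G : SimpleGraph V
  isTree : G.IsTree
  locFin : ∀ v : V, (G.neighborSet v).Finite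
  F : V → V
  adjMap : ∀ ⦃v w : V⦄, G.Adj v w → G.Adj (F v) (F w)
  edgeSurj : ∀ ⦃v w' : V⦄, G.Adj (F v) w' → ∃ w : V, G.Adj v w ∧ F w = w'
  finFibers : ∀ v' : V, {v : V | F v = v'}.Finite

namespace TreeDyn

variable {V : Type}

/-- A local degree function for the branched covering `T.F`: positive on
vertices and edges (edges adjacent to `v` are recorded by their other
endpoint), symmetric on edges, satisfying the Riemann–Hurwitz style
inequality `2 deg(v) - 2 ≥ Σ (deg e - 1)` at each vertex, and the local
equality `deg v = Σ {deg e' : e' adjacent to v, F(e') = F(e)}` for each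
edge `e` adjacent to `v`. -/
def IsLocalDeg (T : TreeDyn V) (dV : V → ℕ) (dE : V → V → ℕ) : Prop :=
  (∀ v w : V, dE v w = dE w v) ∧
  (∀ v : V, 0 < dV v) ∧
  (∀ ⦃v w : V⦄, T.G.Adj v w → 0 < dE v w) ∧
  (∀ v : V, (∑ᶠ w ∈ T.G.neighborSet v, (dE v w - 1)) + 2 ≤ 2 * dV v) ∧
  (∀ ⦃v w : V⦄, T.G.Adj v w →
    dV v = ∑ᶠ w' ∈ {w' : V | T.G.Adj v w' ∧ T.F w' = T.F w}, dE v w')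

/-- `x` and `y` are in the same grand orbit if `F^[n] x = F^[m] y` for some `n, m > 0`. -/
def GrandOrbit (T : TreeDyn V) (x y : V) : Prop :=
  ∃ n m : ℕ, 0 < n ∧ 0 < m ∧ T.F^[n] x = T.F^[m] y

end TreeDyn

/-- The natural topology on the space of ends of a graph: the subspace
topology induced from the product of the (discrete) spaces of components
of complements of finite sets. -/
def endTop {V : Type} (G : SimpleGraph V) : TopologicalSpace G.end :=
  TopologicalSpace.induced Subtype.val
    (⨅ K : (Finset V)ᵒᵖ, TopologicalSpace.induced (fun f => f K) ⊥)

/-- An end is isolated if it is an isolated point of the space of ends. -/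
def IsIsolatedEnd {V : Type} (G : SimpleGraph V) (e : G.end) : Prop :=
  @IsOpen G.end (endTop G) {e}

namespace TreeDyn

variable {V : Type}

/-- `T` is polynomial-like with distinguished end `infty`:
(II) a local degree function exists, (I) `infty` is the unique isolated end,
(III) no vertex has valence one, and (IV) the grand orbit of every vertex
contains a vertex of valence at least three. -/
def IsPolyLike (T : TreeDyn V) (infty : T.G.end) : Prop :=
  (∃ dV dE, T.IsLocalDeg dV dE) ∧
  IsIsolatedEnd T.G infty ∧
  (∀ e : T.G.end, IsIsolatedEnd T.G e → e = infty) ∧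
  (∀ v : V, (T.G.neighborSet v).ncard ≠ 1) ∧
  (∀ v : V, ∃ w : V, T.GrandOrbit v w ∧ 3 ≤ (T.G.neighborSet w).ncard)

/-- The vertex `x` lies below the vertex `v` (the path from `x` to the
end `infty` passes through `v`): either `x = v`, or `x` and `infty`
determine different components of the complement of `{v}`. -/
def Below (T : TreeDyn V) (infty : T.G.end) (v x : V) : Prop :=
  x = v ∨ ∃ h : x ∉ (({v} : Finset V) : Set V),
    T.G.componentComplMk h ≠ infty.val (op ({v} : Finset V))

/-- The end `p` lies below the vertex `v` (the path from `p` to `infty`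
passes through `v`). -/
def EndBelow (T : TreeDyn V) (infty : T.G.end) (v : V) (p : T.G.end) : Prop :=
  p.val (op ({v} : Finset V)) ≠ infty.val (op ({v} : Finset V))

/-- `v₀` is the base of the tree: the vertex of valence ≥ 3 closest to
`infty`, i.e. every vertex of valence ≥ 3 lies below it. -/
def IsBase (T : TreeDyn V) (infty : T.G.end) (v₀ : V) : Prop :=
  3 ≤ (T.G.neighborSet v₀).ncard ∧
  ∀ w : V, 3 ≤ (T.G.neighborSet w).ncard → T.Below infty v₀ w

open Classical in
/-- The combinatorial height relative to the base `v₀`: `|h v|` is the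
graph distance to `v₀`, with `h v ≥ 0` exactly when `v` lies on the ray
from `v₀` to `infty` (i.e. `v₀` lies below `v`). -/
noncomputable def height (T : TreeDyn V) (infty : T.G.end) (v₀ : V) (v : V) : ℤ :=
  if T.Below infty v v₀ then (T.G.dist v₀ v : ℤ) else -(T.G.dist v₀ v : ℤ)

/-- `Dg` is the global degree of `T.F`: for every edge `{v,w}`, the sum of
the degrees of the edges mapping onto it equals `Dg`. -/
def IsGlobalDeg (T : TreeDyn V) (dE : V → V → ℕ) (Dg : ℕ) : Prop :=
  ∀ ⦃v w : V⦄, T.G.Adj v w →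
    Dg = ∑ᶠ a ∈ {a : V | T.F a = v}, ∑ᶠ b ∈ {b : V | T.G.Adj a b ∧ T.F b = w}, dE a b

/-- The critical multiplicity of a vertex. -/
noncomputable def multV (T : TreeDyn V) (dV : V → ℕ) (dE : V → V → ℕ) (v : V) : ℕ :=
  2 * dV v - 2 - ∑ᶠ w ∈ T.G.neighborSet v, (dE v w - 1)

/-- The critical multiplicity of an end `p ≠ infty`: the limiting
(= minimal) value of `dV` along the path from `infty` to `p`, minus one. -/
noncomputable def multEnd (T : TreeDyn V) (infty : T.G.end) (dV : V → ℕ) (p : T.G.end) : ℕ :=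
  sInf {d : ℕ | ∃ v : V, T.EndBelow infty v p ∧ dV v = d} - 1

/-- `μ` is the mass function: `μ v = 1` for `h(v) ≥ 0` and
`μ(F v) = (deg F / deg v) · μ v`. -/
def IsMass (T : TreeDyn V) (infty : T.G.end) (v₀ : V) (dV : V → ℕ) (Dg : ℕ)
    (μ : V → ℚ) : Prop :=
  (∀ v : V, 0 ≤ T.height infty v₀ v → μ v = 1) ∧
  (∀ v : V, μ (T.F v) = ((Dg : ℚ) / (dV v : ℚ)) * μ v)

end TreeDyn


section Toolkit

variable {V : Type} {G : SimpleGraph V}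

noncomputable local instance : DecidableEq V := Classical.decEq V

/-- Any path in a tree realizes the distance. -/
lemma tree_path_length_eq_dist (hT : G.IsTree) {a b : V} (p : G.Walk a b) (hp : p.IsPath) :
    p.length = G.dist a b := by
  obtain ⟨w, hw⟩ := hT.isConnected.exists_walk_length_eq_dist a b
  have hbp : w.bypass.IsPath := SimpleGraph.Walk.bypass_isPath w
  have : (⟨p, hp⟩ : G.Path a b) = ⟨w.bypass, hbp⟩ := hT.IsAcyclic.path_unique _ _
  have hlen : p.length = w.bypass.length := by
    simpa using congrArg (fun q : G.Path a b => q.val.length) this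
  have h1 : w.bypass.length ≤ G.dist a b := hw ▸ SimpleGraph.Walk.length_bypass_le w
  have h2 : G.dist a b ≤ p.length := SimpleGraph.dist_le p
  omega

/-- A vertex on a path splits the distance. -/
lemma tree_dist_split (hT : G.IsTree) {a b c : V} (p : G.Walk a b) (hp : p.IsPath)
    (hc : c ∈ p.support) : G.dist a c + G.dist c b = G.dist a b := by
  classical
  have h1 := tree_path_length_eq_dist hT _ (hp.takeUntil hc)
  have h2 := tree_path_length_eq_dist hT _ (hp.dropUntil hc)
  have h3 := tree_path_length_eq_dist hT p hp
  have h4 := congrArg SimpleGraph.Walk.length (p.take_spec hc)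
  rw [SimpleGraph.Walk.length_append] at h4
  omega

/-- A geodesic path exists. -/
lemma tree_exists_path (hT : G.IsTree) (a b : V) :
    ∃ p : G.Walk a b, p.IsPath ∧ p.length = G.dist a b := by
  obtain ⟨w, hw⟩ := hT.isConnected.exists_walk_length_eq_dist a b
  exact ⟨w.bypass, SimpleGraph.Walk.bypass_isPath w,
    tree_path_length_eq_dist hT _ (SimpleGraph.Walk.bypass_isPath w)⟩

/-- A walk avoiding `K` keeps the complement-component. -/
lemma walk_componentComplMk_eq {K : Set V} {a b : V} (p : G.Walk a b)
    (hp : ∀ c ∈ p.support, c ∉ K) :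
    G.componentComplMk (hp a p.start_mem_support) = G.componentComplMk (hp b p.end_mem_support) := by
  induction p with
  | nil => rfl
  | @cons u v w h q ih =>
      have hq : ∀ c ∈ q.support, c ∉ K := fun c hc =>
        hp c (by simp [SimpleGraph.Walk.support_cons, hc])
      exact (G.componentComplMk_eq_of_adj _ (hq v q.start_mem_support) h).trans (ih hq)

/-- From equality of components, extract a walk avoiding `K`. -/
lemma exists_walk_of_componentComplMk_eq {K : Set V} {a b : V} (ha : a ∉ K) (hb : b ∉ K)
    (h : G.componentComplMk ha = G.componentComplMk hb) :
    ∃ p : G.Walk a b, ∀ c ∈ p.support, c ∉ K := by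
  have hr : (G.induce Kᶜ).Reachable ⟨a, ha⟩ ⟨b, hb⟩ := SimpleGraph.ConnectedComponent.exact h
  obtain ⟨q⟩ := hr
  refine ⟨q.map (SimpleGraph.Embedding.induce Kᶜ).toHom, ?_⟩
  intro c hc
  replace hc : c ∈ (q.map (SimpleGraph.Embedding.induce Kᶜ).toHom).support := hc
  rw [SimpleGraph.Walk.support_map, List.mem_map] at hc
  obtain ⟨⟨x, hx⟩, _, rfl⟩ := hc
  exact hx

/-- If the component of `a` and `b` rel `{u}` differ, every walk from `a` to `b` passes `u`. -/
lemma sep_mem_walk_support {u a b : V} (ha : a ∉ ((({u} : Finset V)) : Set V)) (hb : b ∉ ((({u} : Finset V)) : Set V))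
    (h : G.componentComplMk ha ≠ G.componentComplMk hb) (p : G.Walk a b) : u ∈ p.support := by
  by_contra hu
  exact h (walk_componentComplMk_eq p (fun c hc => by
    simp only [Finset.coe_singleton, Set.mem_singleton_iff]
    rintro rfl; exact hu hc))

/-- Distinct neighbors of `y` lie in distinct components of the complement of `y`. -/
lemma neighbors_comp_ne (hT : G.IsTree) {y z₁ z₂ : V} (h1 : G.Adj y z₁) (h2 : G.Adj y z₂)
    (hne : z₁ ≠ z₂) (hz₁ : z₁ ∉ ((({y} : Finset V)) : Set V)) (hz₂ : z₂ ∉ ((({y} : Finset V)) : Set V)) :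
    G.componentComplMk hz₁ ≠ G.componentComplMk hz₂ := by
  intro he
  obtain ⟨p, hp⟩ := exists_walk_of_componentComplMk_eq hz₁ hz₂ he
  have hbp : p.bypass.IsPath := SimpleGraph.Walk.bypass_isPath p
  have hyp : y ∉ p.bypass.support := fun hy =>
    hp y (SimpleGraph.Walk.support_bypass_subset p hy) (by simp)
  have h2' : (SimpleGraph.Walk.cons h1.symm
      (SimpleGraph.Walk.cons h2 SimpleGraph.Walk.nil)).IsPath := by
    simp [SimpleGraph.Walk.cons_isPath_iff, hne, h1.ne', h2.ne]
  have := hT.IsAcyclic.path_unique ⟨p.bypass, hbp⟩ ⟨_, h2'⟩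
  apply hyp
  rw [show p.bypass = (⟨p.bypass, hbp⟩ : G.Path z₁ z₂).val from rfl, this]
  simp [SimpleGraph.Walk.support_cons]

/-- Pick a representative vertex of the end beyond `K`. -/
lemma end_exists_rep (e : G.end) (K : Finset V) :
    ∃ (x : V) (hx : x ∉ (K : Set V)), G.componentComplMk hx = e.val (op K) :=
  (e.val (op K)).exists_eq_mk

/-- Compatibility of the components of an end. -/
lemma end_proj (e : G.end) {K K' : Finset V} (h : K ⊆ K') {x : V} (hx : x ∉ (K' : Set V))
    (he : G.componentComplMk hx = e.val (op K')) :
    ∃ (hx' : x ∉ (K : Set V)), G.componentComplMk hx' = e.val (op K) := by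
  have hsec := e.prop (CategoryTheory.homOfLE h).op
  refine ⟨Set.notMem_subset (by exact_mod_cast Finset.coe_subset.mpr h) hx, ?_⟩
  rw [← hsec, ← he]
  rfl

namespace TreeDyn

variable {T : TreeDyn V} {infty : T.G.end} {v₀ : V}

lemma below_self (v : V) : T.Below infty v v := Or.inl rfl

lemma height_of_below {v : V} (h : T.Below infty v v₀) :
    T.height infty v₀ v = (T.G.dist v₀ v : ℤ) := if_pos h

lemma height_of_not_below {v : V} (h : ¬ T.Below infty v v₀) :
    T.height infty v₀ v = -(T.G.dist v₀ v : ℤ) := if_neg h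

lemma height_v₀ : T.height infty v₀ v₀ = 0 := by
  rw [height_of_below (below_self v₀)]
  simp [SimpleGraph.dist_self]

lemma natAbs_height (v : V) : (T.height infty v₀ v).natAbs = T.G.dist v₀ v := by
  unfold TreeDyn.height
  split <;> simp

lemma height_nonneg_iff {v : V} : 0 ≤ T.height infty v₀ v ↔ T.Below infty v v₀ := by
  constructor
  · intro h0
    by_cases hb : T.Below infty v v₀
    · exact hb
    · rw [height_of_not_below hb] at h0
      have : T.G.dist v₀ v = 0 := by omega
      have := (T.isTree.isConnected.dist_eq_zero_iff).mp this
      exact Or.inl this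
  · intro hb
    rw [height_of_below hb]
    positivity

lemma sep_of_below {v : V} (hb : T.Below infty v v₀) (hne : v₀ ≠ v) :
    ∃ (h : v₀ ∉ ((({v} : Finset V)) : Set V)),
      T.G.componentComplMk h ≠ infty.val (op ({v} : Finset V)) := by
  rcases hb with h | h
  · exact absurd h hne
  · exact h

/-- Uniqueness of vertices of a given nonnegative height. -/
lemma eq_of_height_eq {u u' : V} (h1 : 0 ≤ T.height infty v₀ u) (h2 : 0 ≤ T.height infty v₀ u')
    (he : T.height infty v₀ u = T.height infty v₀ u') : u = u' := by
  classical
  have hT := T.isTree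
  have hdist : T.G.dist v₀ u = T.G.dist v₀ u' := by
    rw [← natAbs_height (v₀ := v₀) (infty := infty), he, natAbs_height]
  by_cases hu0 : u = v₀
  · subst hu0
    rw [SimpleGraph.dist_self] at hdist
    exact ((hT.isConnected.dist_eq_zero_iff).mp hdist.symm)
  by_cases hu0' : u' = v₀
  · subst hu0'
    rw [SimpleGraph.dist_self] at hdist
    exact ((hT.isConnected.dist_eq_zero_iff).mp hdist).symm
  obtain ⟨hvu, hsu⟩ := sep_of_below (height_nonneg_iff.mp h1) (Ne.symm hu0)
  obtain ⟨hvu', hsu'⟩ := sep_of_below (height_nonneg_iff.mp h2) (Ne.symm hu0')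
  obtain ⟨x, hx, hmk⟩ := end_exists_rep infty ({u, u'} : Finset V)
  obtain ⟨hxu, hmku⟩ := end_proj infty (K := ({u} : Finset V)) (by intro z hz; simp at hz ⊢; tauto) hx hmk
  obtain ⟨hxu', hmku'⟩ := end_proj infty (K := ({u'} : Finset V)) (by intro z hz; simp at hz ⊢; tauto) hx hmk
  obtain ⟨p, hp, hplen⟩ := tree_exists_path hT v₀ x
  have humem : u ∈ p.support := sep_mem_walk_support hvu hxu (by rw [hmku]; exact hsu) p
  have humem' : u' ∈ p.support := sep_mem_walk_support hvu' hxu' (by rw [hmku']; exact hsu') p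
  have hsplit := p.take_spec humem
  have hu'cases : u' ∈ (p.takeUntil u humem).support ∨ u' ∈ (p.dropUntil u humem).support := by
    rw [← SimpleGraph.Walk.mem_support_append_iff, hsplit]
    exact humem'
  rcases hu'cases with hcase | hcase
  · have hd := tree_dist_split hT _ (hp.takeUntil humem) hcase
    have hl := tree_path_length_eq_dist hT _ (hp.takeUntil humem)
    have : T.G.dist u' u = 0 := by omega
    exact ((hT.isConnected.dist_eq_zero_iff).mp this).symm
  · have hd := tree_dist_split hT _ (hp.dropUntil humem) hcase
    have hl := tree_path_length_eq_dist hT _ (hp.dropUntil humem)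
    have hdu := tree_dist_split hT p hp humem
    have hdu' := tree_dist_split hT p hp humem'
    have : T.G.dist u u' = 0 := by omega
    exact (hT.isConnected.dist_eq_zero_iff).mp this

/-- A vertex separating `v₀` from `infty` lies in the `infty`-component of `v₀`. -/
lemma comp_of_sep {u : V} (hb : T.Below infty u v₀) (hne : u ≠ v₀) :
    ∃ (h : u ∉ ((({v₀} : Finset V)) : Set V)),
      T.G.componentComplMk h = infty.val (op ({v₀} : Finset V)) := by
  classical
  have hT := T.isTree
  obtain ⟨hvu, hsu⟩ := sep_of_below hb (Ne.symm hne)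
  obtain ⟨x, hx, hmk⟩ := end_exists_rep infty ({v₀, u} : Finset V)
  obtain ⟨hx0, hmk0⟩ := end_proj infty (K := ({v₀} : Finset V))
    (by intro z hz; simp at hz ⊢; tauto) hx hmk
  obtain ⟨hxu, hmku⟩ := end_proj infty (K := ({u} : Finset V))
    (by intro z hz; simp at hz ⊢; tauto) hx hmk
  obtain ⟨p, hp, hplen⟩ := tree_exists_path hT x v₀
  have humem : u ∈ p.support := sep_mem_walk_support hxu hvu
    (by rw [hmku]; exact fun hh => hsu hh.symm) p
  have hune : u ∉ ((({v₀} : Finset V)) : Set V) := by simp [hne]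
  have hq := hp.takeUntil humem
  have hv₀q : v₀ ∉ (p.takeUntil u humem).support := by
    intro hmem
    have h1 := tree_dist_split hT _ hq hmem
    have h2 := tree_path_length_eq_dist hT _ hq
    have h3 := tree_dist_split hT p hp humem
    have h4 : T.G.dist v₀ u = T.G.dist u v₀ := SimpleGraph.dist_comm ..
    have h5 : T.G.dist v₀ u ≠ 0 := by
      intro h0
      exact hne ((hT.isConnected.dist_eq_zero_iff).mp h0).symm
    omega
  have havoid : ∀ c ∈ (p.takeUntil u humem).support, c ∉ ((({v₀} : Finset V)) : Set V) := by
    intro c hc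
    simp only [Finset.coe_singleton, Set.mem_singleton_iff]
    rintro rfl
    exact hv₀q hc
  have := walk_componentComplMk_eq (p.takeUntil u humem) havoid
  exact ⟨hune, by rw [← this]; exact hmk0⟩

/-- Any vertex avoids a separating vertex into the `v₀`-side or the `infty`-side. -/
lemma spine_two_comps (hbase : T.IsBase infty v₀) {u : V} (hb : T.Below infty u v₀)
    (hne : u ≠ v₀) {z : V} (hz : z ∉ ((({u} : Finset V)) : Set V)) :
    (∃ (h : v₀ ∉ ((({u} : Finset V)) : Set V)), T.G.componentComplMk hz = T.G.componentComplMk h)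
      ∨ T.G.componentComplMk hz =
        (infty.val (op ({u} : Finset V)) : T.G.ComponentCompl ((({u} : Finset V)) : Set V)) := by
  classical
  have hT := T.isTree
  obtain ⟨hvu, hsu⟩ := sep_of_below hb (Ne.symm hne)
  by_contra hcon
  obtain ⟨hcA, hcB⟩ := not_or.mp hcon
  have hGc : T.G.Preconnected := hT.isConnected.preconnected
  have hKne : ((({u} : Finset V)) : Set V).Nonempty := ⟨u, by simp⟩
  obtain ⟨⟨a, ka⟩, haC, hka, hadja⟩ :=
    SimpleGraph.ComponentCompl.exists_adj_boundary_pair hGc hKne (T.G.componentComplMk hvu)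
  obtain ⟨⟨b, kb⟩, hbC, hkb, hadjb⟩ :=
    SimpleGraph.ComponentCompl.exists_adj_boundary_pair hGc hKne (infty.val (op ({u} : Finset V)))
  obtain ⟨⟨c, kc⟩, hcC, hkc, hadjc⟩ :=
    SimpleGraph.ComponentCompl.exists_adj_boundary_pair hGc hKne (T.G.componentComplMk hz)
  simp only [Finset.coe_singleton, Set.mem_singleton_iff] at hka hkb hkc
  rw [hka] at hadja
  rw [hkb] at hadjb
  rw [hkc] at hadjc
  obtain ⟨hna, hma⟩ := haC
  obtain ⟨hnb, hmb⟩ := hbC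
  obtain ⟨hnc, hmc⟩ := hcC
  have hab : a ≠ b := by rintro rfl; exact hsu (by rw [← hma]; exact hmb)
  have hac : a ≠ c := by rintro rfl; exact hcA ⟨hvu, by rw [← hmc]; exact hma⟩
  have hbc : b ≠ c := by rintro rfl; exact hcB (by rw [← hmc]; exact hmb)
  have hsub : ({a, b, c} : Set V) ⊆ T.G.neighborSet u := by
    intro w hw
    rcases hw with rfl | rfl | rfl
    exacts [hadja.symm, hadjb.symm, hadjc.symm]
  have hcard : ({a, b, c} : Set V).ncard = 3 := by
    rw [Set.ncard_insert_of_notMem (by simp [hab, hac]) (by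
      exact (Set.finite_singleton c).insert b), Set.ncard_pair hbc]
  have h3 : 3 ≤ (T.G.neighborSet u).ncard := by
    rw [← hcard]
    exact Set.ncard_le_ncard hsub (T.locFin u)
  rcases hbase.2 u h3 with h | ⟨h', hne'⟩
  · exact hne h
  · obtain ⟨h'', heq⟩ := comp_of_sep hb hne
    exact hne' heq

/-- From a walk from `a` to `x` one can find a neighbor of `a` in the same
component of the complement of `a` as `x`. -/
lemma exists_adj_comp : ∀ (n : ℕ) {a x : V} (Q : T.G.Walk a x), Q.length ≤ n → a ≠ x →
    ∃ b, T.G.Adj a b ∧ b ∈ Q.support ∧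
      ∃ (hb : b ∉ ((({a} : Finset V)) : Set V)) (hx : x ∉ ((({a} : Finset V)) : Set V)),
        T.G.componentComplMk hb = T.G.componentComplMk hx := by
  classical
  intro n
  induction n with
  | zero =>
      intro a x Q hQ hax
      cases Q with
      | nil => exact absurd rfl hax
      | cons h q => simp [SimpleGraph.Walk.length_cons] at hQ
  | succ n ih =>
      intro a x Q hQ hax
      cases Q with
      | nil => exact absurd rfl hax
      | @cons _ b _ h q =>
          by_cases hmem : a ∈ q.support
          · obtain ⟨b', hadj, hbs, hcomp⟩ := ih (q.dropUntil a hmem)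
              (by
                have h1 := SimpleGraph.Walk.length_dropUntil_le q hmem
                simp only [SimpleGraph.Walk.length_cons] at hQ
                omega) hax
            exact ⟨b', hadj, by
              simp only [SimpleGraph.Walk.support_cons, List.mem_cons]
              exact Or.inr (SimpleGraph.Walk.support_dropUntil_subset q hmem hbs), hcomp⟩
          · have havoid : ∀ c ∈ q.support, c ∉ ((({a} : Finset V)) : Set V) := by
              intro c hc
              simp only [Finset.coe_singleton, Set.mem_singleton_iff]
              rintro rfl
              exact hmem hc
            refine ⟨b, h, by simp [SimpleGraph.Walk.support_cons,
              SimpleGraph.Walk.start_mem_support], ?_, ?_, ?_⟩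
            · simp [h.ne']
            · simp [hax.symm]
            · exact walk_componentComplMk_eq q havoid

/-- Every vertex of negative height has a neighbor of height one more. -/
lemma exists_parent (hbase : T.IsBase infty v₀) {u : V}
    (hu : T.height infty v₀ u < 0) :
    ∃ z, T.G.Adj u z ∧ T.height infty v₀ z = T.height infty v₀ u + 1 := by
  classical
  have hT := T.isTree
  have hbneg : ¬ T.Below infty u v₀ := fun hb => absurd (height_nonneg_iff.mpr hb) (by omega)
  have hhu : T.height infty v₀ u = -(T.G.dist v₀ u : ℤ) := height_of_not_below hbneg
  have hdpos : 0 < T.G.dist v₀ u := by omega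
  have huv₀ : u ≠ v₀ := by
    rintro rfl
    simp [SimpleGraph.dist_self] at hdpos
  obtain ⟨p, hp, hplen⟩ := tree_exists_path hT u v₀
  cases p with
  | nil => exact absurd rfl huv₀
  | @cons _ z _ huz q =>
      have hqp : q.IsPath := hp.of_cons
      have hqlen : q.length = T.G.dist z v₀ := tree_path_length_eq_dist hT q hqp
      have hlen : T.G.dist z v₀ + 1 = T.G.dist u v₀ := by
        simp only [SimpleGraph.Walk.length_cons] at hplen
        omega
      have hcomm : T.G.dist u v₀ = T.G.dist v₀ u := SimpleGraph.dist_comm ..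
      have hcommz : T.G.dist z v₀ = T.G.dist v₀ z := SimpleGraph.dist_comm ..
      refine ⟨z, huz, ?_⟩
      by_cases hd1 : T.G.dist v₀ u = 1
      · have : T.G.dist z v₀ = 0 := by omega
        have hzv : z = v₀ := (hT.isConnected.dist_eq_zero_iff).mp (hcommz ▸ this)
        subst hzv
        rw [height_v₀]
        omega
      · -- dist ≥ 2, prove z is not below
        have hdz : T.G.dist v₀ z = T.G.dist v₀ u - 1 := by omega
        have hdzpos : 0 < T.G.dist v₀ z := by omega
        have hzv₀ : z ≠ v₀ := by
          rintro rfl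
          simp [SimpleGraph.dist_self] at hdzpos
        have hznb : ¬ T.Below infty z v₀ := by
          intro hbz
          obtain ⟨hvz, hsz⟩ := sep_of_below hbz (Ne.symm hzv₀)
          have huz' : u ∉ ((({z} : Finset V)) : Set V) := by simp [huz.ne]
          rcases spine_two_comps hbase hbz hzv₀ huz' with ⟨h', hcomp⟩ | hcomp
          · -- u in the v₀ side: contradiction with z on the unique path
            obtain ⟨w, hw⟩ := exists_walk_of_componentComplMk_eq huz' h' hcomp
            have hbp := SimpleGraph.Walk.bypass_isPath w
            have hzbp : z ∉ w.bypass.support := fun hmem =>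
              hw z (SimpleGraph.Walk.support_bypass_subset w hmem) (by simp)
            have := hT.IsAcyclic.path_unique ⟨w.bypass, hbp⟩ ⟨SimpleGraph.Walk.cons huz q, hp⟩
            apply hzbp
            rw [show w.bypass = (⟨w.bypass, hbp⟩ : T.G.Path u v₀).val from rfl, this]
            simp [SimpleGraph.Walk.support_cons, SimpleGraph.Walk.start_mem_support]
          · -- u in the infty side: u would separate v₀ from infty
            apply hbneg
            right
            have hvnu : v₀ ∉ ((({u} : Finset V)) : Set V) := by
              simp [Ne.symm huv₀]
            refine ⟨hvnu, ?_⟩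
            intro hEq
            obtain ⟨x, hx, hmk⟩ := end_exists_rep infty ({u, z} : Finset V)
            obtain ⟨hxu, hmku⟩ := end_proj infty (K := ({u} : Finset V))
              (by intro w hw; simp at hw ⊢; tauto) hx hmk
            obtain ⟨hxz, hmkz⟩ := end_proj infty (K := ({z} : Finset V))
              (by intro w hw; simp at hw ⊢; tauto) hx hmk
            obtain ⟨W, hWavoid⟩ :=
              exists_walk_of_componentComplMk_eq hvnu hxu (hEq.trans hmku.symm)
            have hzW : z ∈ W.support := sep_mem_walk_support hvz hxz
              (by rw [hmkz]; exact hsz) W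
            have hzx : z ≠ x := by
              intro hzx
              apply hx
              simp [← hzx]
            obtain ⟨b, hadjb, hbQ, hbz, hxz', hcompbx⟩ :=
              exists_adj_comp ((W.dropUntil z hzW).length) (W.dropUntil z hzW) le_rfl hzx
            have hbu : b ≠ u := by
              intro hbu
              apply hWavoid b (SimpleGraph.Walk.support_dropUntil_subset W hzW hbQ)
              simp [hbu]
            exact neighbors_comp_ne hT hadjb huz.symm hbu hbz huz'
              (by rw [hcompbx, hmkz]; exact hcomp.symm)
        rw [height_of_not_below hznb, hhu]
        omega


/-- Uniqueness of the neighbor closer to `v₀`. -/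
lemma parent_unique {u z z' : V} (hz : T.G.Adj u z) (hz' : T.G.Adj u z')
    (hd : T.G.dist v₀ z + 1 = T.G.dist v₀ u) (hd' : T.G.dist v₀ z' + 1 = T.G.dist v₀ u) :
    z = z' := by
  classical
  have hT := T.isTree
  have key : ∀ {y : V} (hy : T.G.Adj u y) (_ : T.G.dist v₀ y + 1 = T.G.dist v₀ u)
      (p : T.G.Walk y v₀), p.IsPath → u ∉ p.support := by
    intro y hy hdy p hp hup
    have h1 := tree_dist_split hT p hp hup
    have h2 := tree_path_length_eq_dist hT p hp
    have h3 : T.G.dist y v₀ = T.G.dist v₀ y := SimpleGraph.dist_comm ..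
    have h4 : T.G.dist u v₀ = T.G.dist v₀ u := SimpleGraph.dist_comm ..
    have h5 : T.G.dist y u ≠ 0 := by
      intro h0
      exact hy.ne' ((hT.isConnected.dist_eq_zero_iff).mp h0)
    omega
  obtain ⟨p, hp, hplen⟩ := tree_exists_path hT z v₀
  obtain ⟨p', hp', hplen'⟩ := tree_exists_path hT z' v₀
  have hup : u ∉ p.support := key hz hd p hp
  have hup' : u ∉ p'.support := key hz' hd' p' hp'
  have hQ1 : (SimpleGraph.Walk.cons hz p).IsPath := hp.cons hup
  have hQ2 : (SimpleGraph.Walk.cons hz' p').IsPath := hp'.cons hup'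
  have := hT.IsAcyclic.path_unique ⟨SimpleGraph.Walk.cons hz p, hQ1⟩
    ⟨SimpleGraph.Walk.cons hz' p', hQ2⟩
  have hval : (SimpleGraph.Walk.cons hz p) = (SimpleGraph.Walk.cons hz' p') :=
    congrArg Subtype.val this
  have h1 : (SimpleGraph.Walk.cons hz p).getVert 1 = z :=
    by simp [SimpleGraph.Walk.getVert_cons_succ]
  have h2 : (SimpleGraph.Walk.cons hz' p').getVert 1 = z' :=
    by simp [SimpleGraph.Walk.getVert_cons_succ]
  rw [← h1, ← h2, hval]

/-- Every vertex of nonnegative height has a neighbor of height one more. -/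
lemma exists_up (hbase : T.IsBase infty v₀) {y : V}
    (hy : 0 ≤ T.height infty v₀ y) :
    ∃ z, T.G.Adj y z ∧ T.height infty v₀ z = T.height infty v₀ y + 1 := by
  classical
  have hT := T.isTree
  have hby : T.Below infty y v₀ := height_nonneg_iff.mp hy
  have hGc : T.G.Preconnected := hT.isConnected.preconnected
  have hKne : ((({y} : Finset V)) : Set V).Nonempty := ⟨y, by simp⟩
  obtain ⟨⟨z, k⟩, hzC, hk, hadj⟩ :=
    SimpleGraph.ComponentCompl.exists_adj_boundary_pair hGc hKne (infty.val (op ({y} : Finset V)))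
  simp only [Finset.coe_singleton, Set.mem_singleton_iff] at hk
  rw [hk] at hadj
  have hadjzy : T.G.Adj z y := hadj
  obtain ⟨hzny, hmkz⟩ := hzC
  have hzy : z ≠ y := by
    intro h
    apply hzny
    simp [h]
  have hdzy : T.G.dist y z = 1 := SimpleGraph.dist_eq_one_iff_adj.mpr hadjzy.symm
  have hdist : T.G.dist v₀ z = T.G.dist v₀ y + 1 := by
    by_cases hyv : y = v₀
    · subst hyv
      rw [SimpleGraph.dist_self]
      simpa using hdzy
    · obtain ⟨hvy, hsy⟩ := sep_of_below hby (Ne.symm hyv)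
      obtain ⟨p, hp, hplen⟩ := tree_exists_path hT v₀ z
      have hymem : y ∈ p.support := sep_mem_walk_support hvy hzny
        (by rw [hmkz]; exact hsy) p
      have := tree_dist_split hT p hp hymem
      omega
  have hzv₀ : z ≠ v₀ := by
    intro h
    rw [h, SimpleGraph.dist_self] at hdist
    omega
  have hbz : T.Below infty z v₀ := by
    right
    have hvnz : v₀ ∉ ((({z} : Finset V)) : Set V) := by simp [Ne.symm hzv₀]
    refine ⟨hvnz, ?_⟩
    intro hEq
    obtain ⟨x, hx, hmk⟩ := end_exists_rep infty ({y, z} : Finset V)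
    obtain ⟨hxy, hmky⟩ := end_proj infty (K := ({y} : Finset V))
      (by intro w hw; simp at hw ⊢; tauto) hx hmk
    obtain ⟨hxz, hmkxz⟩ := end_proj infty (K := ({z} : Finset V))
      (by intro w hw; simp at hw ⊢; tauto) hx hmk
    obtain ⟨W, hWavoid⟩ := exists_walk_of_componentComplMk_eq hvnz hxz (hEq.trans hmkxz.symm)
    have hyW : y ∈ W.support := by
      by_cases hyv : y = v₀
      · subst hyv; exact W.start_mem_support
      · obtain ⟨hvy, hsy⟩ := sep_of_below hby (Ne.symm hyv)
        exact sep_mem_walk_support hvy hxy (by rw [hmky]; exact hsy) W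
    have hyx : y ≠ x := by
      intro h
      apply hx
      simp [← h]
    obtain ⟨b, hadjb, hbQ, hby', hxy', hcompbx⟩ :=
      exists_adj_comp ((W.dropUntil y hyW).length) (W.dropUntil y hyW) le_rfl hyx
    have hbz' : b ≠ z := by
      intro h
      apply hWavoid b (SimpleGraph.Walk.support_dropUntil_subset W hyW hbQ)
      simp [h]
    exact neighbors_comp_ne hT hadjb hadjzy.symm hbz' hby' hzny
      (by rw [hcompbx, hmky]; exact hmkz.symm)
  refine ⟨z, hadjzy.symm, ?_⟩
  rw [height_of_below hbz, height_of_below hby, hdist]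
  push_cast
  ring

/-- `v₀` has at least two neighbors of height `-1`. -/
lemma two_children (hbase : T.IsBase infty v₀) :
    ∃ a a', a ≠ a' ∧ T.G.Adj v₀ a ∧ T.G.Adj v₀ a' ∧
      T.height infty v₀ a = -1 ∧ T.height infty v₀ a' = -1 := by
  classical
  have h3 : 2 < (T.G.neighborSet v₀).ncard := hbase.1
  obtain ⟨a, ha, b, hb, c, hc, hab, hac, hbc⟩ :=
    (Set.two_lt_ncard (T.locFin v₀)).mp h3
  have hpm : ∀ x ∈ T.G.neighborSet v₀,
      T.height infty v₀ x = 1 ∨ T.height infty v₀ x = -1 := by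
    intro x hx
    have hdx : T.G.dist v₀ x = 1 := SimpleGraph.dist_eq_one_iff_adj.mpr hx
    have habs : (T.height infty v₀ x).natAbs = T.G.dist v₀ x := natAbs_height x
    omega
  have hone : ∀ x ∈ T.G.neighborSet v₀, ∀ x' ∈ T.G.neighborSet v₀,
      T.height infty v₀ x = 1 → T.height infty v₀ x' = 1 → x = x' := by
    intro x hx x' hx' h1 h1'
    exact eq_of_height_eq (T := T) (infty := infty) (v₀ := v₀) (by omega) (by omega) (by omega)
  rcases hpm a ha with h1 | h1 <;> rcases hpm b hb with h2 | h2 <;>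
    rcases hpm c hc with h3' | h3'
  · exact absurd (hone a ha b hb h1 h2) hab
  · exact absurd (hone a ha b hb h1 h2) hab
  · exact absurd (hone a ha c hc h1 h3') hac
  · exact ⟨b, c, hbc, hb, hc, h2, h3'⟩
  · exact absurd (hone b hb c hc h2 h3') hbc
  · exact ⟨a, c, hac, ha, hc, h1, h3'⟩
  · exact ⟨a, b, hab, ha, hb, h1, h2⟩
  · exact ⟨a, b, hab, ha, hb, h1, h2⟩

/-- Every vertex of height at most `N - 1` has at least two distinct preimages. -/
lemma two_preimages (hbase : T.IsBase infty v₀) {N : ℕ} (hN0 : 0 < N)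
    (hN : ∀ v : V, T.height infty v₀ (T.F v) = T.height infty v₀ v + (N : ℤ)) :
    ∀ (d : ℕ) (y : V), T.height infty v₀ y = (N : ℤ) - 1 - d →
      ∃ x x', x ≠ x' ∧ T.F x = y ∧ T.F x' = y := by
  classical
  intro d
  induction d with
  | zero =>
      intro y hy
      obtain ⟨a, a', hne, hadj, hadj', hha, hha'⟩ := two_children hbase
      have hfa : T.height infty v₀ (T.F a) = (N : ℤ) - 1 := by rw [hN a, hha]; ring
      have hfa' : T.height infty v₀ (T.F a') = (N : ℤ) - 1 := by rw [hN a', hha']; ring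
      have hNy : T.height infty v₀ y = (N : ℤ) - 1 := by rw [hy]; push_cast; ring
      have h0 : (0 : ℤ) ≤ (N : ℤ) - 1 := by
        have : (1 : ℤ) ≤ N := by exact_mod_cast hN0
        omega
      refine ⟨a, a', hne, ?_, ?_⟩
      · exact eq_of_height_eq (by rw [hfa]; exact h0) (by rw [hNy]; exact h0)
          (by rw [hfa, hNy])
      · exact eq_of_height_eq (by rw [hfa']; exact h0) (by rw [hNy]; exact h0)
          (by rw [hfa', hNy])
  | succ d ih =>
      intro y hy
      have hy' : T.height infty v₀ y = (N : ℤ) - 2 - d := by rw [hy]; push_cast; ring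
      -- find the parent `z` of `y`
      have hz : ∃ z, T.G.Adj y z ∧
          T.height infty v₀ z = T.height infty v₀ y + 1 := by
        by_cases h0 : 0 ≤ T.height infty v₀ y
        · exact exists_up hbase h0
        · exact exists_parent hbase (by omega)
      obtain ⟨z, hadjz, hhz⟩ := hz
      have hhz' : T.height infty v₀ z = (N : ℤ) - 1 - d := by rw [hhz, hy']; ring
      obtain ⟨xz, xz', hxne, hfz, hfz'⟩ := ih z hhz'
      obtain ⟨u, hadjxu, hfu⟩ := T.edgeSurj (v := xz) (w' := y)
        (by rw [hfz]; exact hadjz.symm)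
      obtain ⟨u', hadjxu', hfu'⟩ := T.edgeSurj (v := xz') (w' := y)
        (by rw [hfz']; exact hadjz.symm)
      refine ⟨u, u', ?_, hfu, hfu'⟩
      rintro rfl
      -- both xz and xz' are parents of u
      have hhu : T.height infty v₀ u = T.height infty v₀ y - N := by
        have := hN u
        rw [hfu] at this
        omega
      have hhxz : T.height infty v₀ xz = T.height infty v₀ z - N := by
        have := hN xz
        rw [hfz] at this
        omega
      have hhxz' : T.height infty v₀ xz' = T.height infty v₀ z - N := by
        have := hN xz'
        rw [hfz'] at this
        omega
      have hNat : (1 : ℤ) ≤ N := by exact_mod_cast hN0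
      have hu_neg : T.height infty v₀ u = -(2 + d : ℤ) := by
        rw [hhu, hy']; push_cast; ring
      have hxz_val : T.height infty v₀ xz = -(1 + d : ℤ) := by
        rw [hhxz, hhz']; push_cast; ring
      have hxz_val' : T.height infty v₀ xz' = -(1 + d : ℤ) := by
        rw [hhxz', hhz']; push_cast; ring
      have hdu : T.G.dist v₀ u = 2 + d := by
        have habs : (T.height infty v₀ u).natAbs = T.G.dist v₀ u := natAbs_height u
        omega
      have hdxz : T.G.dist v₀ xz = 1 + d := by
        have habs : (T.height infty v₀ xz).natAbs = T.G.dist v₀ xz := natAbs_height xz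
        omega
      have hdxz' : T.G.dist v₀ xz' = 1 + d := by
        have habs : (T.height infty v₀ xz').natAbs = T.G.dist v₀ xz' := natAbs_height xz'
        omega
      exact hxne (parent_unique (v₀ := v₀) hadjxu.symm hadjxu'.symm (by omega) (by omega))


/-- Every vertex has a neighbor. -/
lemma exists_neighbor (hbase : T.IsBase infty v₀) (w : V) : ∃ u, T.G.Adj w u := by
  have hne : (T.G.neighborSet v₀).Nonempty := by
    apply Set.nonempty_of_ncard_ne_zero
    have := hbase.1
    omega
  obtain ⟨n, hn⟩ := hne
  by_cases hw : w = v₀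
  · exact ⟨n, hw ▸ hn⟩
  · obtain ⟨p⟩ := T.isTree.isConnected w v₀
    cases p with
    | nil => exact absurd rfl hw
    | cons h q => exact ⟨_, h⟩

/-- The global degree is the sum of local vertex degrees over any fiber. -/
lemma fiber_sum {dV : V → ℕ} {dE : V → V → ℕ} {Dg : ℕ} (hdeg : T.IsLocalDeg dV dE)
    (hDg : T.IsGlobalDeg dE Dg) (hbase : T.IsBase infty v₀) (w : V) :
    (Dg : ℕ) = ∑ᶠ a ∈ {a : V | T.F a = w}, dV a := by
  obtain ⟨u, hu⟩ := exists_neighbor hbase w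
  rw [hDg hu]
  apply finsum_mem_congr rfl
  intro a ha
  obtain ⟨b₀, hab, hfb⟩ := T.edgeSurj (v := a) (show T.G.Adj (T.F a) u by rw [ha]; exact hu)
  have hloc := hdeg.2.2.2.2 hab
  rw [hfb] at hloc
  exact hloc.symm

lemma pair_le_Dg {dV : V → ℕ} {dE : V → V → ℕ} {Dg : ℕ} (hdeg : T.IsLocalDeg dV dE)
    (hDg : T.IsGlobalDeg dE Dg) (hbase : T.IsBase infty v₀) {w v a : V}
    (hfv : T.F v = w) (hfa : T.F a = w) (hne : v ≠ a) : dV v + dV a ≤ Dg := by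
  classical
  have hsum := fiber_sum (infty := infty) hdeg hDg hbase w
  have hfin := T.finFibers w
  rw [finsum_mem_eq_finite_toFinset_sum _ hfin] at hsum
  have hvmem : v ∈ hfin.toFinset := by
    rw [Set.Finite.mem_toFinset]; exact hfv
  have hamem : a ∈ hfin.toFinset.erase v := by
    rw [Finset.mem_erase, Set.Finite.mem_toFinset]
    exact ⟨Ne.symm hne, hfa⟩
  calc dV v + dV a ≤ dV v + ∑ x ∈ hfin.toFinset.erase v, dV x := by
        have := Finset.single_le_sum (f := dV) (fun i _ => Nat.zero_le _) hamem
        omega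
    _ = ∑ x ∈ hfin.toFinset, dV x := Finset.add_sum_erase _ _ hvmem
    _ = Dg := hsum.symm

lemma le_Dg {dV : V → ℕ} {dE : V → V → ℕ} {Dg : ℕ} (hdeg : T.IsLocalDeg dV dE)
    (hDg : T.IsGlobalDeg dE Dg) (hbase : T.IsBase infty v₀) {w v : V}
    (hfv : T.F v = w) : dV v ≤ Dg := by
  classical
  have hsum := fiber_sum (infty := infty) hdeg hDg hbase w
  have hfin := T.finFibers w
  rw [finsum_mem_eq_finite_toFinset_sum _ hfin] at hsum
  have hvmem : v ∈ hfin.toFinset := by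
    rw [Set.Finite.mem_toFinset]; exact hfv
  have := Finset.single_le_sum (f := dV) (fun i _ => Nat.zero_le _) hvmem
  omega

lemma Dg_pos {dV : V → ℕ} {dE : V → V → ℕ} {Dg : ℕ} (hdeg : T.IsLocalDeg dV dE)
    (hDg : T.IsGlobalDeg dE Dg) (hbase : T.IsBase infty v₀) : 0 < Dg := by
  have h1 := le_Dg (infty := infty) hdeg hDg hbase (rfl : T.F v₀ = T.F v₀)
  have h2 := hdeg.2.1 v₀
  omega

lemma mass_step {dV : V → ℕ} {dE : V → V → ℕ} {Dg : ℕ} {μ : V → ℚ}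
    (hdeg : T.IsLocalDeg dV dE) (hDgpos : 0 < Dg)
    (hμ : T.IsMass infty v₀ dV Dg μ) (v : V) :
    μ v = (dV v : ℚ) / (Dg : ℚ) * μ (T.F v) := by
  have h2 := hμ.2 v
  have hdv : (0:ℚ) < (dV v : ℚ) := by exact_mod_cast hdeg.2.1 v
  have hDg : (0:ℚ) < (Dg : ℚ) := by exact_mod_cast hDgpos
  rw [h2]
  field_simp

lemma mu_nonneg {dV : V → ℕ} {dE : V → V → ℕ} {Dg : ℕ} {μ : V → ℚ} {N : ℕ}
    (hdeg : T.IsLocalDeg dV dE) (hDgpos : 0 < Dg)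
    (hμ : T.IsMass infty v₀ dV Dg μ) (hN0 : 0 < N)
    (hN : ∀ v : V, T.height infty v₀ (T.F v) = T.height infty v₀ v + (N : ℤ)) :
    ∀ v : V, 0 ≤ μ v := by
  have key : ∀ (n : ℕ) (v : V), -(n : ℤ) ≤ T.height infty v₀ v → 0 ≤ μ v := by
    intro n
    induction n with
    | zero =>
        intro v h
        rw [hμ.1 v (by omega)]
        norm_num
    | succ n ih =>
        intro v h
        by_cases h0 : 0 ≤ T.height infty v₀ v
        · rw [hμ.1 v h0]; norm_num
        · have hF := hN v
          have hnext := ih (T.F v) (by omega)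
          rw [mass_step hdeg hDgpos hμ v]
          positivity
  intro v
  exact key (T.height infty v₀ v).natAbs v (by omega)

end TreeDyn

end Toolkit

/-- **Diffusion of mass.**
Let `F : T → T` be a polynomial-like branched covering with local degree
function `(dV, dE)`, global degree `Dg`, base `v₀`, translation constant `N`
and mass function `μ`.  Then for every `k ≥ 0` and every vertex `v` with
`h(v) = −k·N`, one has `μ v ≤ ((Dg − 1)/Dg)^k`. -/
theorem mass_diffusion_bound
    {V : Type} (T : TreeDyn V) (infty : T.G.end)
    (hpl : T.IsPolyLike infty)
    (dV : V → ℕ) (dE : V → V → ℕ) (hdeg : T.IsLocalDeg dV dE)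
    (v₀ : V) (hbase : T.IsBase infty v₀)
    (Dg : ℕ) (hDg : T.IsGlobalDeg dE Dg)
    (N : ℕ) (hN0 : 0 < N)
    (hN : ∀ v : V, T.height infty v₀ (T.F v) = T.height infty v₀ v + (N : ℤ))
    (μ : V → ℚ) (hμ : T.IsMass infty v₀ dV Dg μ) :
    ∀ (k : ℕ) (v : V), T.height infty v₀ v = -((k * N : ℕ) : ℤ) →
      μ v ≤ (((Dg : ℚ) - 1) / (Dg : ℚ)) ^ k := by
  have hDgpos : 0 < Dg := TreeDyn.Dg_pos (infty := infty) hdeg hDg hbase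
  have hDg1 : (1:ℚ) ≤ (Dg : ℚ) := by exact_mod_cast hDgpos
  have hDgQ : (0:ℚ) < (Dg : ℚ) := by linarith
  have hrnn : (0:ℚ) ≤ ((Dg : ℚ) - 1) / (Dg : ℚ) := by
    apply div_nonneg <;> linarith
  intro k
  induction k with
  | zero =>
      intro v hv
      simp only [Nat.zero_mul, Nat.cast_zero, neg_zero] at hv
      rw [hμ.1 v (by omega)]
      norm_num
  | succ k ih =>
      intro v hv
      have hN1 : 1 ≤ N := hN0
      have hw : T.height infty v₀ (T.F v) = -((k * N : ℕ) : ℤ) := by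
        rw [hN v, hv]
        push_cast
        ring
      have hd : T.height infty v₀ (T.F v) = (N : ℤ) - 1 - ((k * N + (N - 1) : ℕ) : ℤ) := by
        rw [hw]
        push_cast [hN1]
        ring
      obtain ⟨x, x', hxne, hfx, hfx'⟩ :=
        TreeDyn.two_preimages hbase hN0 hN (k * N + (N - 1)) (T.F v) hd
      have hpair : ∃ a, a ≠ v ∧ T.F a = T.F v := by
        by_cases hxv : x = v
        · exact ⟨x', by rw [← hxv]; exact hxne.symm, hfx'⟩
        · exact ⟨x, hxv, hfx⟩
      obtain ⟨a, hav, hfa⟩ := hpair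
      have hDgsum : dV v + dV a ≤ Dg :=
        TreeDyn.pair_le_Dg (infty := infty) hdeg hDg hbase rfl hfa (Ne.symm hav)
      have hdVa : 1 ≤ dV a := hdeg.2.1 a
      have hbound : (dV v : ℚ) ≤ (Dg : ℚ) - 1 := by
        have : dV v + 1 ≤ Dg := by omega
        have := (Nat.cast_le (α := ℚ)).mpr this
        push_cast at this
        linarith
      have hμw : 0 ≤ μ (T.F v) :=
        TreeDyn.mu_nonneg (infty := infty) hdeg hDgpos hμ hN0 hN (T.F v)
      have hih := ih (T.F v) hw
      calc μ v = (dV v : ℚ) / (Dg : ℚ) * μ (T.F v) :=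
            TreeDyn.mass_step (infty := infty) hdeg hDgpos hμ v
        _ ≤ ((Dg : ℚ) - 1) / (Dg : ℚ) * μ (T.F v) := by
            exact mul_le_mul_of_nonneg_right ((div_le_div_iff_of_pos_right hDgQ).mpr hbound) hμw
        _ ≤ ((Dg : ℚ) - 1) / (Dg : ℚ) * (((Dg : ℚ) - 1) / (Dg : ℚ)) ^ k :=
            mul_le_mul_of_nonneg_left hih hrnn
        _ = (((Dg : ℚ) - 1) / (Dg : ℚ)) ^ (k + 1) := by ring
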